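/- arXiv:2504.08769 — 2 statements merged into one kernel-verified Lean document; each statement's English description precedes it below -/
import Mathlib

section
/- Under the assumptions of the implicit event-time theorem, the event map F(x₀) = Φ(t*(x₀); x₀) is continuously differentiable near x̄₀ and its Jacobian is DF(x̄₀) = (I − f(x_e) ⊗ ∇e(x_e) / (∇e(x_e) · f(x_e))) · D_{x₀}Φ(T; x̄₀), where x_e = F(x̄₀). -/
/-- The event map `F(x₀) = Φ(t*(x₀); x₀)` is C¹ near `x̄₀` and its Jacobian is
`DF(x̄₀) = (I − f(x_e) ⊗ ∇e(x_e)/(∇e(x_e)·f(x_e))) · D_{x₀}Φ(T; x̄₀)`,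
where `x_e = F(x̄₀) = Φ(T; x̄₀)`. -/
theorem event_map_jacobian {n : ℕ}
    (f : (Fin n → ℝ) → (Fin n → ℝ)) (hf : ContDiff ℝ 1 f)
    (Φ : ℝ → (Fin n → ℝ) → (Fin n → ℝ))
    (hΦ : ContDiff ℝ 1 (fun p : ℝ × (Fin n → ℝ) => Φ p.1 p.2))
    (hΦ0 : ∀ x₀, Φ 0 x₀ = x₀)
    (hflow : ∀ t x₀, HasDerivAt (fun s => Φ s x₀) (f (Φ t x₀)) t)
    (e : (Fin n → ℝ) → ℝ) (he : ContDiff ℝ 1 e)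
    (xbar₀ : Fin n → ℝ) (T : ℝ)
    (hev : e (Φ T xbar₀) = 0)
    (htrans : fderiv ℝ e (Φ T xbar₀) (f (Φ T xbar₀)) ≠ 0)
    (U : Set (Fin n → ℝ)) (hU : U ∈ nhds xbar₀)
    (tstar : (Fin n → ℝ) → ℝ) (hts : ContDiffOn ℝ 1 tstar U)
    (htT : tstar xbar₀ = T)
    (hte : ∀ x₀ ∈ U, e (Φ (tstar x₀) x₀) = 0)
    (F : (Fin n → ℝ) → (Fin n → ℝ)) (hF : ∀ x₀, F x₀ = Φ (tstar x₀) x₀) :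
    (∃ V ∈ nhds xbar₀, ContDiffOn ℝ 1 F V) ∧
    ∀ v : Fin n → ℝ,
      fderiv ℝ F xbar₀ v =
        fderiv ℝ (fun y => Φ T y) xbar₀ v -
          ((fderiv ℝ e (Φ T xbar₀) (fderiv ℝ (fun y => Φ T y) xbar₀ v)) /
            (fderiv ℝ e (Φ T xbar₀) (f (Φ T xbar₀)))) • f (Φ T xbar₀) := by
  have hFfun : F = fun x => Φ (tstar x) x := funext hF
  -- C¹ on U
  have hFc1 : ContDiffOn ℝ 1 F U := by
    rw [hFfun]
    exact hΦ.comp_contDiffOn (hts.prodMk contDiffOn_id)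
  refine ⟨⟨U, hU, hFc1⟩, ?_⟩
  -- full derivative of uncurried Φ at (T, xbar₀)
  set xe := Φ T xbar₀ with hxe
  have hΦd : DifferentiableAt ℝ (fun p : ℝ × (Fin n → ℝ) => Φ p.1 p.2) (T, xbar₀) :=
    (hΦ.differentiable one_ne_zero).differentiableAt
  set A := fderiv ℝ (fun p : ℝ × (Fin n → ℝ) => Φ p.1 p.2) (T, xbar₀) with hA
  have hAd : HasFDerivAt (fun p : ℝ × (Fin n → ℝ) => Φ p.1 p.2) A (T, xbar₀) :=
    hΦd.hasFDerivAt
  -- partial derivative in time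
  have hpt : HasDerivAt (fun t : ℝ => (t, xbar₀) : ℝ → ℝ × (Fin n → ℝ)) ((1 : ℝ), (0 : Fin n → ℝ)) T :=
    (hasDerivAt_id T).prodMk (hasDerivAt_const T xbar₀)
  have htime : A (1, 0) = f xe := by
    have h1 : HasDerivAt (fun t : ℝ => Φ t xbar₀) (A (1, 0)) T := by
      have := hAd.comp_hasDerivAt T hpt; exact this
    exact h1.unique (hflow T xbar₀)
  -- partial derivative in space
  have hpx : HasFDerivAt (fun y : Fin n → ℝ => ((T, y) : ℝ × (Fin n → ℝ)))
      (ContinuousLinearMap.inr ℝ ℝ (Fin n → ℝ)) xbar₀ :=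
    (hasFDerivAt_const T xbar₀).prodMk (hasFDerivAt_id xbar₀)
  have hBd : HasFDerivAt (fun y => Φ T y)
      (A.comp (ContinuousLinearMap.inr ℝ ℝ (Fin n → ℝ))) xbar₀ := hAd.comp xbar₀ hpx
  set B := fderiv ℝ (fun y => Φ T y) xbar₀ with hB
  have hBeq : ∀ v, B v = A (0, v) := by
    intro v
    rw [hB, hBd.fderiv]; rfl
  -- decompose A
  have hAdec : ∀ (s : ℝ) (v : Fin n → ℝ), A (s, v) = s • f xe + B v := by
    intro s v
    have : (s, v) = s • ((1 : ℝ), (0 : Fin n → ℝ)) + ((0 : ℝ), v) := by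
      simp [Prod.ext_iff]
    rw [this, map_add, map_smul, htime, hBeq]
  -- derivative of tstar
  have htsd : DifferentiableAt ℝ tstar xbar₀ :=
    ((hts.differentiableOn one_ne_zero) xbar₀ (mem_of_mem_nhds hU)).differentiableAt hU
  set L := fderiv ℝ tstar xbar₀ with hL
  have hLd : HasFDerivAt tstar L xbar₀ := htsd.hasFDerivAt
  -- derivative of F
  have hinner : HasFDerivAt (fun x : Fin n → ℝ => ((tstar x, x) : ℝ × (Fin n → ℝ)))
      (L.prod (ContinuousLinearMap.id ℝ (Fin n → ℝ))) xbar₀ :=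
    hLd.prodMk (hasFDerivAt_id xbar₀)
  have hFd : HasFDerivAt F (A.comp (L.prod (ContinuousLinearMap.id ℝ (Fin n → ℝ)))) xbar₀ := by
    rw [hFfun]
    have hAd' : HasFDerivAt (fun p : ℝ × (Fin n → ℝ) => Φ p.1 p.2) A (tstar xbar₀, xbar₀) := by
      rw [htT]; exact hAd
    have hc := HasFDerivAt.comp (f := fun x : Fin n → ℝ => ((tstar x, x) : ℝ × (Fin n → ℝ)))
      (x := xbar₀) hAd' hinner
    exact hc
  have hDF : ∀ v, fderiv ℝ F xbar₀ v = (L v) • f xe + B v := by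
    intro v
    rw [hFd.fderiv]
    have : (A.comp (L.prod (ContinuousLinearMap.id ℝ (Fin n → ℝ)))) v = A (L v, v) := rfl
    rw [this, hAdec]
  -- e ∘ F vanishes near xbar₀
  set De := fderiv ℝ e xe with hDe
  have heF : HasFDerivAt (fun x => e (F x)) (De.comp (A.comp (L.prod (ContinuousLinearMap.id ℝ (Fin n → ℝ))))) xbar₀ := by
    have hed : HasFDerivAt e De (F xbar₀) := by
      have : F xbar₀ = xe := by rw [hF, htT]
      rw [this]
      exact ((he.differentiable one_ne_zero).differentiableAt).hasFDerivAt
    exact hed.comp xbar₀ hFd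
  have hzero : HasFDerivAt (fun x => e (F x)) (0 : (Fin n → ℝ) →L[ℝ] ℝ) xbar₀ := by
    have heq : (fun x => e (F x)) =ᶠ[nhds xbar₀] (fun _ => (0 : ℝ)) := by
      filter_upwards [hU] with x hx
      rw [hF]; exact hte x hx
    exact (hasFDerivAt_const (0:ℝ) xbar₀).congr_of_eventuallyEq heq
  have hDeDF : ∀ v, De ((L v) • f xe + B v) = 0 := by
    intro v
    have h := heF.unique hzero
    have : (De.comp (A.comp (L.prod (ContinuousLinearMap.id ℝ (Fin n → ℝ))))) v = De (A (L v, v)) := rfl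
    have h2 : De (A (L v, v)) = 0 := by rw [← this, h]; rfl
    rwa [hAdec] at h2
  intro v
  have hkey := hDeDF v
  rw [map_add, map_smul] at hkey
  have hkey' : L v * De (f xe) + De (B v) = 0 := by simpa [smul_eq_mul] using hkey
  have hLv : L v = -(De (B v)) / De (f xe) := by
    field_simp
    linarith [hkey']
  rw [hDF v, hLv, neg_div, neg_smul]
  abel
end

section
/- In the adjoint method, the sensitivity λ(0) obtained by integrating λ̇ = −a(t)ᵀ ∇_θ f(x(t), θ, t) backward from λ(t_f) = 0, where a solves the adjoint equation ȧ = −(∇ₓf)ᵀ a with a(t_f) = ∇ₓ L(x(t_f)), equals the gradient dL(x(t_f; θ))/dθ of the terminal loss with respect to the parameters θ, for a C¹ vector field f(x, θ, t) linear-in-parameter case n = 1 and scalar θ. -/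
open Real Set intervalIntegral

lemma norm_triple_le (a b c : ℝ) : ‖((a,b,c) : ℝ×ℝ×ℝ)‖ ≤ |a| + |b| + |c| := by
  have h : ‖((a,b,c) : ℝ×ℝ×ℝ)‖ = max ‖a‖ (max ‖b‖ ‖c‖) := rfl
  rw [h]; simp only [Real.norm_eq_abs]
  apply max_le <;> [skip; apply max_le] <;> nlinarith [abs_nonneg a, abs_nonneg b, abs_nonneg c]

lemma hasDerivAt_slice1 (F : ℝ×ℝ×ℝ → ℝ) (hF : Differentiable ℝ F) (u θ t : ℝ) :
    HasDerivAt (fun v => F (v, θ, t)) (fderiv ℝ F (u,θ,t) (1,0,0)) u :=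
  (hF (u,θ,t)).hasFDerivAt.comp_hasDerivAt u
    ((hasDerivAt_id u).prodMk ((hasDerivAt_const u θ).prodMk (hasDerivAt_const u t)))

lemma hasDerivAt_slice2 (F : ℝ×ℝ×ℝ → ℝ) (hF : Differentiable ℝ F) (u θ t : ℝ) :
    HasDerivAt (fun p => F (u, p, t)) (fderiv ℝ F (u,θ,t) (0,1,0)) θ :=
  (hF (u,θ,t)).hasFDerivAt.comp_hasDerivAt θ
    ((hasDerivAt_const θ u).prodMk ((hasDerivAt_id θ).prodMk (hasDerivAt_const θ t)))

lemma clm_triple_apply (φ : ℝ×ℝ×ℝ →L[ℝ] ℝ) (p q : ℝ) :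
    φ (p, q, 0) = p * φ (1,0,0) + q * φ (0,1,0) := by
  have h : ((p,q,(0:ℝ)) : ℝ×ℝ×ℝ) = p•((1,0,0) : ℝ×ℝ×ℝ) + q•((0,1,0) : ℝ×ℝ×ℝ) := by
    simp [Prod.ext_iff]
  rw [h, map_add, map_smul, map_smul, smul_eq_mul, smul_eq_mul]

lemma norm_e1 : ‖((1,0,0) : ℝ×ℝ×ℝ)‖ = 1 := by
  have h : ‖((1,0,0) : ℝ×ℝ×ℝ)‖ = max ‖(1:ℝ)‖ (max ‖(0:ℝ)‖ ‖(0:ℝ)‖) := rfl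
  rw [h]; simp

theorem key
    (f : ℝ → ℝ → ℝ → ℝ)
    (hf : ContDiff ℝ 1 (fun p : ℝ × ℝ × ℝ => f p.1 p.2.1 p.2.2))
    (θ₀ tf : ℝ) (htf : 0 ≤ tf)
    (x : ℝ → ℝ → ℝ)
    (hx0 : ∀ θ, x θ 0 = x θ₀ 0)
    (hx : ∀ θ t, HasDerivAt (fun s => x θ s) (f (x θ t) θ t) t) :
    ∃ s : ℝ → ℝ, s 0 = 0 ∧
      (∀ t, HasDerivAt s (deriv (fun u => f u θ₀ t) (x θ₀ t) * s t
          + deriv (fun θ => f (x θ₀ t) θ t) θ₀) t) ∧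
      HasDerivAt (fun θ => x θ tf) (s tf) θ₀ := by
  set F : ℝ×ℝ×ℝ → ℝ := fun p => f p.1 p.2.1 p.2.2 with hFdef
  have hFd : Differentiable ℝ F := hf.differentiable one_ne_zero
  have hDFc : Continuous (fun z => fderiv ℝ F z) := hf.continuous_fderiv one_ne_zero
  have hXc : ∀ θ, Continuous (x θ) := fun θ =>
    continuous_iff_continuousAt.2 fun t => (hx θ t).continuousAt
  set X : ℝ → ℝ := fun t => x θ₀ t with hXdef
  set A : ℝ → ℝ := fun t => fderiv ℝ F (X t, θ₀, t) (1,0,0) with hAdef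
  set B : ℝ → ℝ := fun t => fderiv ℝ F (X t, θ₀, t) (0,1,0) with hBdef
  have hcurve : Continuous (fun t => ((X t, θ₀, t) : ℝ×ℝ×ℝ)) :=
    (hXc θ₀).prodMk (continuous_const.prodMk continuous_id)
  have hAc : Continuous A := (hDFc.comp hcurve).clm_apply continuous_const
  have hBc : Continuous B := (hDFc.comp hcurve).clm_apply continuous_const
  have hA : ∀ t, deriv (fun u => f u θ₀ t) (X t) = A t := fun t =>
    (hasDerivAt_slice1 F hFd (X t) θ₀ t).deriv
  have hB : ∀ t, deriv (fun θ => f (X t) θ t) θ₀ = B t := fun t =>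
    (hasDerivAt_slice2 F hFd (X t) θ₀ t).deriv
  -- construct s via variation of parameters
  set I : ℝ → ℝ := fun t => ∫ u in (0:ℝ)..t, A u with hIdef
  have hI : ∀ t, HasDerivAt I (A t) t := fun t =>
    intervalIntegral.integral_hasDerivAt_right (hAc.intervalIntegrable _ _)
      (hAc.stronglyMeasurableAtFilter _ _) hAc.continuousAt
  have hIc : Continuous I := continuous_iff_continuousAt.2 fun t => (hI t).continuousAt
  set ψ : ℝ → ℝ := fun t => ∫ u in (0:ℝ)..t, B u * Real.exp (-(I u)) with hψdef
  have hint : Continuous (fun u => B u * Real.exp (-(I u))) := hBc.mul (hIc.neg.rexp)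
  have hψ : ∀ t, HasDerivAt ψ (B t * Real.exp (-(I t))) t := fun t =>
    intervalIntegral.integral_hasDerivAt_right (hint.intervalIntegrable _ _)
      (hint.stronglyMeasurableAtFilter _ _) hint.continuousAt
  set s : ℝ → ℝ := fun t => Real.exp (I t) * ψ t with hsdef
  have hs0 : s 0 = 0 := by simp [hsdef, hψdef]
  have hs' : ∀ t, HasDerivAt s (A t * s t + B t) t := by
    intro t
    have h1 : HasDerivAt (fun t => Real.exp (I t)) (Real.exp (I t) * A t) t := (hI t).exp
    have h2 := (h1.mul (hψ t))
    refine h2.congr_deriv ?_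
    have h3 : Real.exp (I t) * (B t * Real.exp (-(I t))) = B t := by
      rw [Real.exp_neg]; field_simp
    rw [h3]; ring
  refine ⟨s, hs0, fun t => by rw [hA, hB]; exact hs' t, ?_⟩
  have hsc : Continuous s := continuous_iff_continuousAt.2 fun t => (hs' t).continuousAt
  -- the compact tube K
  obtain ⟨r, hr⟩ : ∃ r : ℝ, 0 < r := ⟨1, one_pos⟩
  set K : Set (ℝ×ℝ×ℝ) := (fun q : ℝ×ℝ×ℝ => ((X q.2.2 + q.1, q.2.1, q.2.2) : ℝ×ℝ×ℝ)) ''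
      (Icc (-r) r ×ˢ Icc (θ₀-r) (θ₀+r) ×ˢ Icc 0 tf) with hKdef
  have hKco : IsCompact K := by
    apply (isCompact_Icc.prod (isCompact_Icc.prod isCompact_Icc)).image
    exact (((hXc θ₀).comp (continuous_snd.comp continuous_snd)).add continuous_fst).prodMk
      ((continuous_fst.comp continuous_snd).prodMk (continuous_snd.comp continuous_snd))
  have hmem : ∀ u p t : ℝ, t ∈ Icc 0 tf → |u - X t| ≤ r → |p - θ₀| ≤ r →
      ((u, p, t) : ℝ×ℝ×ℝ) ∈ K := by
    intro u p t ht hu hp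
    refine ⟨(u - X t, p, t), ⟨?_, ?_, ht⟩, by simp⟩
    · exact abs_le.1 hu
    · rw [mem_Icc]; constructor <;> [linarith [(abs_le.1 hp).1]; linarith [(abs_le.1 hp).2]]
  obtain ⟨C, hC⟩ := hKco.exists_bound_of_continuousOn (hDFc.continuousOn (s := K))
  set Lp : ℝ := max 1 C with hLpdef
  have hLp1 : (1:ℝ) ≤ Lp := le_max_left _ _
  have hLp0 : (0:ℝ) < Lp := lt_of_lt_of_le one_pos hLp1
  have hLpb : ∀ z ∈ K, ‖fderiv ℝ F z‖ ≤ Lp := fun z hz => (hC z hz).trans (le_max_right _ _)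
  set C₁ : ℝ := Real.exp (Lp * tf) with hC₁def
  have hC₁1 : (1:ℝ) ≤ C₁ := by
    rw [hC₁def]; exact Real.one_le_exp (by positivity)
  have hC₁0 : (0:ℝ) < C₁ := lt_of_lt_of_le one_pos hC₁1
  -- gronwallBound bound
  have hgb : ∀ ε : ℝ, 0 ≤ ε → ∀ t ∈ Icc (0:ℝ) tf, gronwallBound 0 Lp ε (t - 0) ≤ ε * C₁ := by
    intro ε hε t ht
    rw [gronwallBound_of_K_ne_0 (ne_of_gt hLp0)]
    simp only [zero_mul, zero_add, sub_zero]
    have h1 : Real.exp (Lp * t) - 1 ≤ C₁ := by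
      rw [hC₁def]
      have : Real.exp (Lp * t) ≤ Real.exp (Lp * tf) :=
        Real.exp_le_exp.2 (mul_le_mul_of_nonneg_left ht.2 (le_of_lt hLp0))
      linarith
    have h2 : ε / Lp ≤ ε := div_le_self hε hLp1
    have h3 : (0:ℝ) ≤ Real.exp (Lp * t) - 1 := by
      have := Real.one_le_exp (x := Lp * t) (by nlinarith [ht.1])
      linarith
    calc ε / Lp * (Real.exp (Lp * t) - 1) ≤ ε * (Real.exp (Lp * t) - 1) :=
          mul_le_mul_of_nonneg_right h2 h3
      _ ≤ ε * C₁ := mul_le_mul_of_nonneg_left h1 hε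
  -- segment inside the tube
  have hseg : ∀ (θ t : ℝ), t ∈ Icc 0 tf → |x θ t - X t| ≤ r → |θ - θ₀| ≤ r →
      segment ℝ ((X t, θ₀, t) : ℝ×ℝ×ℝ) ((x θ t, θ, t) : ℝ×ℝ×ℝ) ⊆ K := by
    intro θ t ht hg hd z hz
    rw [segment_eq_image'] at hz
    obtain ⟨τ, hτ, rfl⟩ := hz
    show ((X t, θ₀, t) : ℝ×ℝ×ℝ) + τ • (((x θ t, θ, t) : ℝ×ℝ×ℝ) - ((X t, θ₀, t) : ℝ×ℝ×ℝ)) ∈ K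
    have hz1 : ((X t, θ₀, t) : ℝ×ℝ×ℝ) + τ • (((x θ t, θ, t) : ℝ×ℝ×ℝ) - (X t, θ₀, t))
        = ((X t + τ * (x θ t - X t), θ₀ + τ * (θ - θ₀), t) : ℝ×ℝ×ℝ) := by
      simp only [Prod.mk_sub_mk, Prod.smul_mk, Prod.mk_add_mk, smul_eq_mul, Prod.mk.injEq]
      refine ⟨trivial, trivial, by ring⟩
    rw [hz1]
    apply hmem _ _ _ ht
    · have : |X t + τ * (x θ t - X t) - X t| = |τ| * |x θ t - X t| := by
        rw [add_sub_cancel_left, abs_mul]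
      rw [this, abs_of_nonneg hτ.1]
      calc τ * |x θ t - X t| ≤ 1 * |x θ t - X t| :=
            mul_le_mul_of_nonneg_right hτ.2 (abs_nonneg _)
        _ = |x θ t - X t| := one_mul _
        _ ≤ r := hg
    · have : |θ₀ + τ * (θ - θ₀) - θ₀| = |τ| * |θ - θ₀| := by
        rw [add_sub_cancel_left, abs_mul]
      rw [this, abs_of_nonneg hτ.1]
      calc τ * |θ - θ₀| ≤ 1 * |θ - θ₀| := mul_le_mul_of_nonneg_right hτ.2 (abs_nonneg _)
        _ = |θ - θ₀| := one_mul _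
        _ ≤ r := hd
  -- mean value estimate
  have hMVT : ∀ (θ t : ℝ), t ∈ Icc 0 tf → |x θ t - X t| ≤ r → |θ - θ₀| ≤ r →
      ∀ (φ : ℝ×ℝ×ℝ →L[ℝ] ℝ) (c : ℝ),
      (∀ z ∈ segment ℝ ((X t, θ₀, t) : ℝ×ℝ×ℝ) ((x θ t, θ, t) : ℝ×ℝ×ℝ),
        ‖fderiv ℝ F z - φ‖ ≤ c) →
      |f (x θ t) θ t - f (X t) θ₀ t - φ (x θ t - X t, θ - θ₀, 0)|
        ≤ c * (|x θ t - X t| + |θ - θ₀|) := by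
    intro θ t ht hg hd φ c hφ
    have hc0 : 0 ≤ c := le_trans (norm_nonneg _) (hφ _ (left_mem_segment ℝ _ _))
    have hconv : Convex ℝ (segment ℝ ((X t, θ₀, t) : ℝ×ℝ×ℝ) ((x θ t, θ, t) : ℝ×ℝ×ℝ)) :=
      convex_segment _ _
    have := hconv.norm_image_sub_le_of_norm_hasFDerivWithin_le'
      (f := F) (f' := fun z => fderiv ℝ F z) (φ := φ) (C := c)
      (fun z _ => (hFd z).hasFDerivAt.hasFDerivWithinAt) hφ
      (left_mem_segment ℝ _ _) (right_mem_segment ℝ _ _)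
    have hvec : ((x θ t, θ, t) : ℝ×ℝ×ℝ) - ((X t, θ₀, t) : ℝ×ℝ×ℝ)
        = ((x θ t - X t, θ - θ₀, 0) : ℝ×ℝ×ℝ) := by
      simp [Prod.ext_iff]
    rw [hvec] at this
    have hnorm : ‖((x θ t - X t, θ - θ₀, 0) : ℝ×ℝ×ℝ)‖ ≤ |x θ t - X t| + |θ - θ₀| := by
      have := norm_triple_le (x θ t - X t) (θ - θ₀) 0
      simpa using this
    calc |f (x θ t) θ t - f (X t) θ₀ t - φ (x θ t - X t, θ - θ₀, 0)|
        ≤ c * ‖((x θ t - X t, θ - θ₀, 0) : ℝ×ℝ×ℝ)‖ := this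
      _ ≤ c * (|x θ t - X t| + |θ - θ₀|) := mul_le_mul_of_nonneg_left hnorm hc0
  -- Gronwall estimate helper
  have hgron : ∀ θ : ℝ, |θ - θ₀| ≤ r → ∀ T, T ∈ Icc (0:ℝ) tf →
      (∀ u ∈ Icc (0:ℝ) T, |x θ u - X u| ≤ r) →
      ∀ t ∈ Icc (0:ℝ) T, |x θ t - X t| ≤ Lp * |θ - θ₀| * C₁ := by
    intro θ hd T hT htube t htt
    have hb := norm_le_gronwallBound_of_norm_deriv_right_le
      (f := fun u => x θ u - X u)
      (f' := fun u => f (x θ u) θ u - f (X u) θ₀ u)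
      (δ := 0) (K := Lp) (ε := Lp * |θ - θ₀|) (a := 0) (b := T)
      (((hXc θ).sub (hXc θ₀)).continuousOn)
      (fun u _ => ((hx θ u).sub (hx θ₀ u)).hasDerivWithinAt)
      (by simp [hx0 θ, hXdef])
      ?_ t htt
    · have h2 := hgb (Lp * |θ - θ₀|) (by positivity) t ⟨htt.1, htt.2.trans hT.2⟩
      rw [Real.norm_eq_abs] at hb
      calc |x θ t - X t| ≤ _ := hb
        _ ≤ Lp * |θ - θ₀| * C₁ := h2
    · intro u hu
      have hu' : u ∈ Icc (0:ℝ) tf := ⟨hu.1, (le_of_lt hu.2).trans hT.2⟩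
      have hgu : |x θ u - X u| ≤ r := htube u ⟨hu.1, le_of_lt hu.2⟩
      have hφ : ∀ z ∈ segment ℝ ((X u, θ₀, u):ℝ×ℝ×ℝ) ((x θ u, θ, u):ℝ×ℝ×ℝ),
          ‖fderiv ℝ F z - 0‖ ≤ Lp := by
        intro z hz; rw [sub_zero]; exact hLpb z (hseg θ u hu' hgu hd hz)
      have h := hMVT θ u hu' hgu hd 0 Lp hφ
      rw [ContinuousLinearMap.zero_apply, sub_zero] at h
      rw [Real.norm_eq_abs, Real.norm_eq_abs]
      calc |f (x θ u) θ u - f (X u) θ₀ u| ≤ Lp * (|x θ u - X u| + |θ - θ₀|) := h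
        _ = Lp * |x θ u - X u| + Lp * |θ - θ₀| := by ring
  -- the tube
  obtain ⟨δ1, hδ1pos, hδ1r, hδ1half⟩ : ∃ δ1 : ℝ, 0 < δ1 ∧ δ1 ≤ r ∧ Lp * δ1 * C₁ ≤ r/2 := by
    refine ⟨min r (r/(2*Lp*C₁)), by positivity, min_le_left _ _, ?_⟩
    have h1 : min r (r/(2*Lp*C₁)) ≤ r/(2*Lp*C₁) := min_le_right _ _
    have h2 : Lp * (r/(2*Lp*C₁)) * C₁ = r/2 := by field_simp
    calc Lp * min r (r/(2*Lp*C₁)) * C₁ ≤ Lp * (r/(2*Lp*C₁)) * C₁ := by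
          have := mul_le_mul_of_nonneg_right (mul_le_mul_of_nonneg_left h1 hLp0.le) hC₁0.le
          linarith
      _ = r/2 := h2
    
  have htube : ∀ θ : ℝ, |θ - θ₀| ≤ δ1 → ∀ t ∈ Icc (0:ℝ) tf, |x θ t - X t| ≤ r := by
    intro θ hd
    by_contra hcon
    push_neg at hcon
    obtain ⟨t₂, ht₂, ht₂r⟩ := hcon
    have hgc : Continuous (fun u => |x θ u - X u|) := ((hXc θ).sub (hXc θ₀)).abs
    have hSclosed : IsClosed {t | t ∈ Icc (0:ℝ) tf ∧ r ≤ |x θ t - X t|} := by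
      have : {t | t ∈ Icc (0:ℝ) tf ∧ r ≤ |x θ t - X t|}
          = Icc (0:ℝ) tf ∩ (fun u => |x θ u - X u|) ⁻¹' (Ici r) := rfl
      rw [this]
      exact isClosed_Icc.inter (IsClosed.preimage hgc isClosed_Ici)
    have hSne : {t | t ∈ Icc (0:ℝ) tf ∧ r ≤ |x θ t - X t|}.Nonempty :=
      ⟨t₂, ht₂, le_of_lt ht₂r⟩
    have hSbdd : BddBelow {t | t ∈ Icc (0:ℝ) tf ∧ r ≤ |x θ t - X t|} :=
      ⟨0, fun u hu => hu.1.1⟩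
    obtain ⟨t₁, ht₁def⟩ : ∃ t₁, t₁ = sInf {t | t ∈ Icc (0:ℝ) tf ∧ r ≤ |x θ t - X t|} :=
      ⟨_, rfl⟩
    have ht₁S : t₁ ∈ {t | t ∈ Icc (0:ℝ) tf ∧ r ≤ |x θ t - X t|} := by
      rw [ht₁def]; exact hSclosed.csInf_mem hSne hSbdd
    have ht₁0 : 0 < t₁ := by
      rcases lt_or_eq_of_le ht₁S.1.1 with h | h
      · exact h
      · exfalso
        have h0 : |x θ 0 - X 0| = 0 := by
          have : x θ 0 - X 0 = 0 := by
            show x θ 0 - x θ₀ 0 = 0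
            rw [hx0 θ]; ring
          rw [this, abs_zero]
        have h1 := ht₁S.2
        rw [← h, h0] at h1
        linarith
    have hlt : ∀ u, 0 ≤ u → u < t₁ → |x θ u - X u| < r := by
      intro u hu0 hu1
      by_contra hcc
      push_neg at hcc
      have huS : u ∈ {t | t ∈ Icc (0:ℝ) tf ∧ r ≤ |x θ t - X t|} :=
        ⟨⟨hu0, hu1.le.trans ht₁S.1.2⟩, hcc⟩
      have := csInf_le hSbdd huS
      rw [← ht₁def] at this
      exact absurd this (not_le.2 hu1)
    have hle : ∀ u ∈ Icc (0:ℝ) t₁, |x θ u - X u| ≤ r := by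
      intro u hu
      rcases lt_or_eq_of_le hu.2 with h | h
      · exact (hlt u hu.1 h).le
      · subst h
        have htd : Filter.Tendsto (fun v => |x θ v - X v|) (nhdsWithin u (Iio u))
            (nhds (|x θ u - X u|)) := (hgc.continuousAt).continuousWithinAt.tendsto
        apply le_of_tendsto htd
        filter_upwards [Ioo_mem_nhdsLT_of_mem (show u ∈ Ioc (0:ℝ) u from ⟨ht₁0, le_refl u⟩)]
          with v hv
        exact (hlt v hv.1.le hv.2).le
    have hgr := hgron θ (hd.trans hδ1r) t₁ ht₁S.1 hle t₁ ⟨ht₁0.le, le_refl _⟩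
    have habs : Lp * |θ - θ₀| * C₁ ≤ Lp * δ1 * C₁ := by
      have := mul_le_mul_of_nonneg_right (mul_le_mul_of_nonneg_left hd hLp0.le) hC₁0.le
      linarith
    have := ht₁S.2
    linarith
  -- final: little-o estimate
  rw [hasDerivAt_iff_isLittleO, Asymptotics.isLittleO_iff]
  intro c hc
  have huc := hKco.uniformContinuousOn_of_continuous hDFc.continuousOn
  rw [Metric.uniformContinuousOn_iff] at huc
  obtain ⟨ε', hε'pos, hε'le⟩ : ∃ ε' : ℝ, 0 < ε' ∧ ε' * ((Lp * C₁ + 1) * C₁) ≤ c := by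
    refine ⟨c / ((Lp * C₁ + 1) * C₁), by positivity, ?_⟩
    rw [div_mul_cancel₀ _ (by positivity : ((Lp * C₁ + 1) * C₁) ≠ 0)]
  obtain ⟨ρ, hρpos, hρ⟩ := huc ε' hε'pos
  obtain ⟨δ2, hδ2pos, hδ2a, hδ2b⟩ : ∃ δ2 : ℝ, 0 < δ2 ∧ δ2 ≤ δ1 ∧ (Lp*C₁+1) * δ2 < ρ := by
    refine ⟨min δ1 (ρ/((Lp*C₁+1)+1)), by positivity, min_le_left _ _, ?_⟩
    have h1 : min δ1 (ρ/((Lp*C₁+1)+1)) ≤ ρ/((Lp*C₁+1)+1) := min_le_right _ _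
    have h2 : (Lp*C₁+1) * (ρ/((Lp*C₁+1)+1)) < ρ := by
      rw [← mul_div_assoc, div_lt_iff₀ (by positivity)]
      nlinarith [hρpos, hLp0, hC₁0]
    have h3 := mul_le_mul_of_nonneg_left h1 (by positivity : (0:ℝ) ≤ Lp*C₁+1)
    linarith
  filter_upwards [Metric.ball_mem_nhds θ₀ hδ2pos] with θ hθ
  rw [Metric.mem_ball, Real.dist_eq] at hθ
  have hd1 : |θ - θ₀| ≤ δ1 := hθ.le.trans hδ2a
  have hdr : |θ - θ₀| ≤ r := hd1.trans hδ1r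
  have htub := htube θ hd1
  have hgro : ∀ t ∈ Icc (0:ℝ) tf, |x θ t - X t| ≤ Lp * |θ - θ₀| * C₁ :=
    hgron θ hdr tf ⟨htf, le_refl tf⟩ htub
  have hb := norm_le_gronwallBound_of_norm_deriv_right_le
    (f := fun t => x θ t - X t - (θ - θ₀) * s t)
    (f' := fun t => f (x θ t) θ t - f (X t) θ₀ t - (θ - θ₀) * (A t * s t + B t))
    (δ := 0) (K := Lp) (ε := ε' * ((Lp * C₁ + 1) * |θ - θ₀|)) (a := 0) (b := tf)
    ((((hXc θ).sub (hXc θ₀)).sub (continuous_const.mul hsc)).continuousOn)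
    (fun t _ => (((hx θ t).sub (hx θ₀ t)).sub ((hs' t).const_mul (θ - θ₀))).hasDerivWithinAt)
    (by
      have h0 : x θ 0 - X 0 - (θ - θ₀) * s 0 = 0 := by
        show x θ 0 - x θ₀ 0 - (θ - θ₀) * s 0 = 0
        rw [hx0 θ, hs0]; ring
      show ‖x θ 0 - X 0 - (θ - θ₀) * s 0‖ ≤ 0
      rw [Real.norm_eq_abs, h0, abs_zero])
    ?_ tf ⟨htf, le_refl tf⟩
  · have hfinal := hgb (ε' * ((Lp*C₁+1)*|θ - θ₀|)) (by positivity) tf ⟨htf, le_refl tf⟩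
    rw [Real.norm_eq_abs] at hb
    show ‖x θ tf - x θ₀ tf - (θ - θ₀) • s tf‖ ≤ c * ‖θ - θ₀‖
    rw [Real.norm_eq_abs, Real.norm_eq_abs, smul_eq_mul]
    calc |x θ tf - x θ₀ tf - (θ - θ₀) * s tf| ≤ ε' * ((Lp*C₁+1)*|θ - θ₀|) * C₁ :=
          hb.trans hfinal
      _ = (ε' * ((Lp*C₁+1)*C₁)) * |θ - θ₀| := by ring
      _ ≤ c * |θ - θ₀| := mul_le_mul_of_nonneg_right hε'le (abs_nonneg _)
  · intro t ht
    show ‖f (x θ t) θ t - f (X t) θ₀ t - (θ - θ₀) * (A t * s t + B t)‖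
        ≤ Lp * ‖x θ t - X t - (θ - θ₀) * s t‖ + ε' * ((Lp * C₁ + 1) * |θ - θ₀|)
    have ht' : t ∈ Icc (0:ℝ) tf := ⟨ht.1, ht.2.le⟩
    have hgt : |x θ t - X t| ≤ r := htub t ht'
    have hgt2 : |x θ t - X t| ≤ Lp * |θ - θ₀| * C₁ := hgro t ht'
    have hz1K : ((X t, θ₀, t) : ℝ×ℝ×ℝ) ∈ K := by
      apply hmem _ _ _ ht' <;> simp [hr.le]
    have hφ : ∀ z ∈ segment ℝ ((X t, θ₀, t):ℝ×ℝ×ℝ) ((x θ t, θ, t):ℝ×ℝ×ℝ),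
        ‖fderiv ℝ F z - fderiv ℝ F (X t, θ₀, t)‖ ≤ ε' := by
      intro z hz
      have hzK := hseg θ t ht' hgt hdr hz
      have hdist : dist z ((X t, θ₀, t) : ℝ×ℝ×ℝ) < ρ := by
        rw [segment_eq_image'] at hz
        obtain ⟨τ, hτ, rfl⟩ := hz
        rw [dist_eq_norm]
        have hvec : ((x θ t, θ, t) : ℝ×ℝ×ℝ) - ((X t, θ₀, t) : ℝ×ℝ×ℝ)
            = ((x θ t - X t, θ - θ₀, 0) : ℝ×ℝ×ℝ) := by
          simp [Prod.ext_iff]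
        have hτa : |τ| ≤ 1 := by rw [abs_of_nonneg hτ.1]; exact hτ.2
        have hnv : ‖((x θ t, θ, t) : ℝ×ℝ×ℝ) - ((X t, θ₀, t) : ℝ×ℝ×ℝ)‖
            ≤ |x θ t - X t| + |θ - θ₀| := by
          rw [hvec]
          have := norm_triple_le (x θ t - X t) (θ - θ₀) 0
          simpa using this
        calc ‖((X t, θ₀, t) : ℝ×ℝ×ℝ) + τ • (((x θ t, θ, t) : ℝ×ℝ×ℝ) - ((X t, θ₀, t) : ℝ×ℝ×ℝ))
              - ((X t, θ₀, t) : ℝ×ℝ×ℝ)‖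
            = ‖τ • (((x θ t, θ, t) : ℝ×ℝ×ℝ) - ((X t, θ₀, t) : ℝ×ℝ×ℝ))‖ := by
              rw [add_sub_cancel_left]
          _ = |τ| * ‖((x θ t, θ, t) : ℝ×ℝ×ℝ) - ((X t, θ₀, t) : ℝ×ℝ×ℝ)‖ := by
              rw [norm_smul, Real.norm_eq_abs]
          _ ≤ 1 * (|x θ t - X t| + |θ - θ₀|) := by
              apply mul_le_mul hτa hnv (norm_nonneg _) zero_le_one
          _ = |x θ t - X t| + |θ - θ₀| := one_mul _
          _ ≤ Lp * |θ - θ₀| * C₁ + |θ - θ₀| := by linarith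
          _ = (Lp*C₁+1) * |θ - θ₀| := by ring
          _ ≤ (Lp*C₁+1) * δ2 := by
              apply mul_le_mul_of_nonneg_left hθ.le (by positivity)
          _ < ρ := hδ2b
      have hlt := hρ z hzK _ hz1K hdist
      rw [dist_eq_norm] at hlt
      exact hlt.le
    have hmv := hMVT θ t ht' hgt hdr (fderiv ℝ F (X t, θ₀, t)) ε' hφ
    have happ : (fderiv ℝ F (X t, θ₀, t)) (x θ t - X t, θ - θ₀, 0)
        = (x θ t - X t) * A t + (θ - θ₀) * B t := clm_triple_apply _ _ _
    rw [happ] at hmv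
    have hAb : |A t| ≤ Lp := by
      calc |A t| = ‖(fderiv ℝ F (X t, θ₀, t)) (1,0,0)‖ := rfl
        _ ≤ ‖fderiv ℝ F (X t, θ₀, t)‖ * ‖((1,0,0):ℝ×ℝ×ℝ)‖ :=
            ContinuousLinearMap.le_opNorm _ _
        _ = ‖fderiv ℝ F (X t, θ₀, t)‖ := by rw [norm_e1, mul_one]
        _ ≤ Lp := hLpb _ hz1K
    have hsplit : f (x θ t) θ t - f (X t) θ₀ t - (θ - θ₀) * (A t * s t + B t)
        = (f (x θ t) θ t - f (X t) θ₀ t - ((x θ t - X t) * A t + (θ - θ₀) * B t))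
          + A t * (x θ t - X t - (θ - θ₀) * s t) := by ring
    rw [Real.norm_eq_abs, Real.norm_eq_abs, hsplit]
    have hy : |A t * (x θ t - X t - (θ - θ₀) * s t)| ≤ Lp * |x θ t - X t - (θ - θ₀) * s t| := by
      rw [abs_mul]
      exact mul_le_mul_of_nonneg_right hAb (abs_nonneg _)
    have hR : ε' * (|x θ t - X t| + |θ - θ₀|) ≤ ε' * ((Lp*C₁+1) * |θ - θ₀|) := by
      apply mul_le_mul_of_nonneg_left _ hε'pos.le
      calc |x θ t - X t| + |θ - θ₀| ≤ Lp * |θ - θ₀| * C₁ + |θ - θ₀| := by linarith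
        _ = (Lp*C₁+1) * |θ - θ₀| := by ring
    calc |(f (x θ t) θ t - f (X t) θ₀ t - ((x θ t - X t) * A t + (θ - θ₀) * B t))
          + A t * (x θ t - X t - (θ - θ₀) * s t)|
        ≤ |f (x θ t) θ t - f (X t) θ₀ t - ((x θ t - X t) * A t + (θ - θ₀) * B t)|
          + |A t * (x θ t - X t - (θ - θ₀) * s t)| := abs_add_le _ _
      _ ≤ ε' * ((Lp*C₁+1) * |θ - θ₀|) + Lp * |x θ t - X t - (θ - θ₀) * s t| := by
          have := hmv.trans hR
          linarith
      _ = Lp * |x θ t - X t - (θ - θ₀) * s t| + ε' * ((Lp*C₁+1) * |θ - θ₀|) := by ring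




theorem main_nonneg
    (f : ℝ → ℝ → ℝ → ℝ)
    (hf : ContDiff ℝ 1 (fun p : ℝ × ℝ × ℝ => f p.1 p.2.1 p.2.2))
    (L : ℝ → ℝ) (hL : ContDiff ℝ 1 L)
    (x₀ θ₀ tf : ℝ) (htf : 0 ≤ tf)
    (x : ℝ → ℝ → ℝ)
    (hx0 : ∀ θ, x θ 0 = x₀)
    (hx : ∀ θ t, HasDerivAt (fun s => x θ s) (f (x θ t) θ t) t)
    (a : ℝ → ℝ)
    (ha : ∀ t, HasDerivAt a (-(deriv (fun u => f u θ₀ t) (x θ₀ t) * a t)) t)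
    (haf : a tf = deriv L (x θ₀ tf))
    (lam : ℝ → ℝ)
    (hlam : ∀ t, HasDerivAt lam (-(a t * deriv (fun θ => f (x θ₀ t) θ t) θ₀)) t)
    (hlamf : lam tf = 0) :
    HasDerivAt (fun θ => L (x θ tf)) (lam 0) θ₀ := by
  obtain ⟨s, hs0, hs', hsd⟩ := key f hf θ₀ tf htf x (fun θ => by rw [hx0 θ, hx0 θ₀]) hx
  have hG : ∀ t, HasDerivAt (fun t => a t * s t + lam t) 0 t := by
    intro t
    have h := ((ha t).mul (hs' t)).add (hlam t)
    refine h.congr_deriv ?_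
    ring
  have hGc := is_const_of_deriv_eq_zero (fun t => (hG t).differentiableAt)
    (fun t => (hG t).deriv) 0 tf
  have hval : lam 0 = deriv L (x θ₀ tf) * s tf := by
    rw [hs0, hlamf, haf] at hGc
    rw [mul_zero, zero_add, add_zero] at hGc
    exact hGc
  have hLd : HasDerivAt L (deriv L (x θ₀ tf)) (x θ₀ tf) :=
    ((hL.differentiable one_ne_zero) (x θ₀ tf)).hasDerivAt
  have hcomp := hLd.comp θ₀ hsd
  rw [hval]
  exact hcomp

/-- Correctness of the adjoint method for parameter gradients in the scalar case
(`n = 1`, one scalar parameter `θ`): the backward-integrated sensitivity `λ(0)`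
equals the gradient of the terminal loss with respect to `θ`. -/
theorem adjoint_method_parameter_gradient
    (f : ℝ → ℝ → ℝ → ℝ)
    (hf : ContDiff ℝ 1 (fun p : ℝ × ℝ × ℝ => f p.1 p.2.1 p.2.2))
    (L : ℝ → ℝ) (hL : ContDiff ℝ 1 L)
    (x₀ θ₀ tf : ℝ)
    (x : ℝ → ℝ → ℝ)
    (hx0 : ∀ θ, x θ 0 = x₀)
    (hx : ∀ θ t, HasDerivAt (fun s => x θ s) (f (x θ t) θ t) t)
    (a : ℝ → ℝ)
    (ha : ∀ t, HasDerivAt a (-(deriv (fun u => f u θ₀ t) (x θ₀ t) * a t)) t)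
    (haf : a tf = deriv L (x θ₀ tf))
    (lam : ℝ → ℝ)
    (hlam : ∀ t, HasDerivAt lam (-(a t * deriv (fun θ => f (x θ₀ t) θ t) θ₀)) t)
    (hlamf : lam tf = 0) :
    HasDerivAt (fun θ => L (x θ tf)) (lam 0) θ₀ := by
  rcases le_or_gt 0 tf with htf | htf
  · exact main_nonneg f hf L hL x₀ θ₀ tf htf x hx0 hx a ha haf lam hlam hlamf
  · -- time reversal
    set f' : ℝ → ℝ → ℝ → ℝ := fun u p t => -f u p (-t) with hf'def
    have hf' : ContDiff ℝ 1 (fun p : ℝ × ℝ × ℝ => f' p.1 p.2.1 p.2.2) := by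
      have hm : ContDiff ℝ 1 (fun q : ℝ×ℝ×ℝ => ((q.1, q.2.1, -q.2.2) : ℝ×ℝ×ℝ)) :=
        contDiff_fst.prodMk ((contDiff_fst.comp contDiff_snd).prodMk
          ((contDiff_snd.comp contDiff_snd).neg))
      exact (hf.comp hm).neg
    have hmain := main_nonneg f' hf' L hL x₀ θ₀ (-tf) (by linarith)
      (fun p t => x p (-t))
      (fun p => by simp [hx0 p])
      (fun p t => by
        have h := (hx p (-t)).comp t (hasDerivAt_neg t)
        refine h.congr_deriv ?_
        ring)
      (fun t => a (-t))
      (fun t => by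
        have h := (ha (-t)).comp t (hasDerivAt_neg t)
        refine h.congr_deriv ?_
        have hdneg : deriv (fun u => f' u θ₀ t) (x θ₀ (-t))
            = -deriv (fun u => f u θ₀ (-t)) (x θ₀ (-t)) := deriv.neg
        rw [hdneg]
        ring)
      (by simp only [neg_neg]; exact haf)
      (fun t => lam (-t))
      (fun t => by
        have h := (hlam (-t)).comp t (hasDerivAt_neg t)
        refine h.congr_deriv ?_
        have hdneg : deriv (fun p => f' (x θ₀ (-t)) p t) θ₀
            = -deriv (fun p => f (x θ₀ (-t)) p (-t)) θ₀ := deriv.neg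
        rw [hdneg]
        ring)
      (by simp only [neg_neg]; exact hlamf)
    simp only [neg_neg, neg_zero] at hmain
    exact hmain
end
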